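/- arXiv:1612.08666 — 2 statements merged into one kernel-verified Lean document; each statement's English description precedes it below -/
import Mathlib

section
/- Let N ≥ 2 be an integer and σ² > 0. Let y(1), ..., y(N) be independent complex Gaussian random variables where |y(n)|² is exponentially distributed with mean N + σ² and |y(t)|² is exponentially distributed with mean σ² for t ≠ n. Then the probability P_c that |y(n)|² > max_{t ≠ n} |y(t)|² equals [Σ_{r=0}^{N-2} C(N-2,r)(-1)^r (r + (N+2σ²)/(N+σ²))^{-1}] / [Σ_{r=0}^{N-2} C(N-2,r)(-1)^r (r+1)^{-1}]. -/
open Real MeasureTheory Finset Set Filter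

lemma integral_exp_neg_mul_Ioi_zero {b : ℝ} (hb : 0 < b) :
    (∫ u in Set.Ioi (0 : ℝ), Real.exp (-b * u)) = b⁻¹ := by
  have hderiv : ∀ x ∈ Set.Ici (0:ℝ), HasDerivAt (fun x => -Real.exp (-b * x) / b)
      (Real.exp (-b * x)) x := by
    intro x _
    have h2 : HasDerivAt (fun x => -Real.exp (-b * x) / b) (-(Real.exp (-b * x) * (-b * 1)) / b) x :=
      (((hasDerivAt_id x).const_mul (-b)).exp.neg.div_const b)
    convert h2 using 1
    field_simp
  have htend : Tendsto (fun x => -Real.exp (-b * x) / b) atTop (nhds (-0 / b)) := by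
    refine Tendsto.div_const (Tendsto.neg ?_) _
    exact Real.tendsto_exp_atBot.comp (tendsto_id.const_mul_atTop_of_neg (neg_neg_iff_pos.2 hb))
  have := MeasureTheory.integral_Ioi_of_hasDerivAt_of_tendsto'
    hderiv ((exp_neg_integrableOn_Ioi 0 hb)) htend
  rw [this]
  simp [neg_div]

lemma alt_sum_inv (n : ℕ) :
    ∑ r ∈ Finset.range (n + 1), ((n.choose r : ℝ) * (-1) ^ r * ((r : ℝ) + 1)⁻¹)
      = ((n : ℝ) + 1)⁻¹ := by
  have key : (∑ r ∈ Finset.range (n + 1),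
      ((n.choose r : ℝ) * (-1) ^ r * ((r : ℝ) + 1)⁻¹)) * ((n : ℝ) + 1) = 1 := by
    rw [Finset.sum_mul]
    have h1 : ∀ r ∈ Finset.range (n + 1),
        ((n.choose r : ℝ) * (-1) ^ r * ((r : ℝ) + 1)⁻¹) * ((n : ℝ) + 1)
          = (-1) ^ r * ((n+1).choose (r+1) : ℝ) := by
      intro r _
      have h' : ((n:ℝ) + 1) * (n.choose r : ℝ) = ((n+1).choose (r+1) : ℝ) * ((r:ℝ) + 1) := by
        exact_mod_cast congrArg (Nat.cast : ℕ → ℝ) (Nat.add_one_mul_choose_eq n r)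
      have hr : ((r:ℝ) + 1) ≠ 0 := by positivity
      field_simp
      linear_combination h'
    rw [Finset.sum_congr rfl h1]
    have hz : ∑ k ∈ Finset.range (n+2), ((-1:ℝ))^k * (((n+1).choose k : ℕ) : ℝ) = 0 := by
      have h := Int.alternating_sum_range_choose_of_ne (n := n+1) (by omega)
      have := congrArg (fun z : ℤ => (z : ℝ)) h
      push_cast at this
      convert this using 2
    rw [Finset.sum_range_succ' (fun k => ((-1:ℝ))^k * (((n+1).choose k : ℕ) : ℝ)) (n+1)] at hz
    simp [pow_succ] at hz
    linarith [hz]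
  have hne : ((n:ℝ) + 1) ≠ 0 := by positivity
  field_simp at key ⊢
  linarith [key]

/-- The probability of correct transmit-antenna detection: the probability that an
exponential variable with mean `N + s` (the squared magnitude of the intended coordinate)
exceeds the maximum of `N - 1` i.i.d. exponential variables with mean `s`, expressed as
the integral of the tail probability `exp (-u/(N+s))` against the density of the maximum,
equals the closed-form ratio of binomial sums. -/
theorem correct_detection_probability (N : ℕ) (hN : 2 ≤ N) (s : ℝ) (hs : 0 < s) :
    (∫ u in Set.Ioi (0 : ℝ),
        Real.exp (-u / (N + s)) *
          (((N : ℝ) - 1) / s * (1 - Real.exp (-u / s)) ^ (N - 2) * Real.exp (-u / s)))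
      = (∑ r ∈ Finset.range (N - 1),
            ((N - 2).choose r : ℝ) * (-1) ^ r * ((r : ℝ) + ((N : ℝ) + 2 * s) / ((N : ℝ) + s))⁻¹) /
        (∑ r ∈ Finset.range (N - 1), ((N - 2).choose r : ℝ) * (-1) ^ r * ((r : ℝ) + 1)⁻¹) := by
  obtain ⟨n, rfl⟩ : ∃ n, N = n + 2 := ⟨N - 2, by omega⟩
  have h2 : n + 2 - 2 = n := by omega
  have h1 : n + 2 - 1 = n + 1 := by omega
  rw [h1, h2]
  have hA : (0:ℝ) < ((n+2:ℕ):ℝ) + s := by positivity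
  have hAne : ((n+2:ℕ):ℝ) + s ≠ 0 := ne_of_gt hA
  set A : ℝ := ((n+2:ℕ):ℝ) + s with hAdef
  -- the coefficients and rates
  set c : ℕ → ℝ := fun r => (n.choose r : ℝ) * (-1) ^ r * (((n+2:ℕ):ℝ) - 1) / s with hc
  set b : ℕ → ℝ := fun r => 1 / A + ((r:ℝ) + 1) / s with hb
  have hbpos : ∀ r : ℕ, 0 < b r := by
    intro r
    have : (0:ℝ) < ((r:ℝ) + 1) / s := by positivity
    have : (0:ℝ) < 1 / A := by positivity
    simp only [hb]
    positivity
  have hx : ∀ u : ℝ,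
      Real.exp (-u / (((n+2:ℕ):ℝ) + s)) *
          ((((n+2:ℕ):ℝ) - 1) / s * (1 - Real.exp (-u / s)) ^ n * Real.exp (-u / s))
        = ∑ r ∈ Finset.range (n+1), c r * Real.exp (-(b r) * u) := by
    intro u
    rw [show (1 - Real.exp (-u / s)) = (-(Real.exp (-u / s)) + 1) by ring, add_pow]
    simp only [Finset.mul_sum, Finset.sum_mul]
    refine Finset.sum_congr rfl fun r hr => ?_
    rw [show -(b r) * u = -u / A + (r:ℝ) * (-u / s) + (-u / s) by
          simp only [hb]; field_simp; ring,
        Real.exp_add, Real.exp_add, Real.exp_nat_mul, neg_pow]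
    simp only [hc, one_pow]
    ring
  have hint : ∀ r ∈ Finset.range (n+1),
      IntegrableOn (fun u => c r * Real.exp (-(b r) * u)) (Set.Ioi (0:ℝ)) := by
    intro r _
    exact (exp_neg_integrableOn_Ioi 0 (hbpos r)).const_mul (c r)
  calc (∫ u in Set.Ioi (0 : ℝ),
        Real.exp (-u / (((n+2:ℕ):ℝ) + s)) *
          ((((n+2:ℕ):ℝ) - 1) / s * (1 - Real.exp (-u / s)) ^ n * Real.exp (-u / s)))
      = ∫ u in Set.Ioi (0:ℝ), ∑ r ∈ Finset.range (n+1), c r * Real.exp (-(b r) * u) := by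
        exact integral_congr_ae (Filter.Eventually.of_forall fun u => hx u)
    _ = ∑ r ∈ Finset.range (n+1), ∫ u in Set.Ioi (0:ℝ), c r * Real.exp (-(b r) * u) :=
        MeasureTheory.integral_finset_sum _ hint
    _ = ∑ r ∈ Finset.range (n+1), c r * (b r)⁻¹ := by
        refine Finset.sum_congr rfl fun r _ => ?_
        rw [MeasureTheory.integral_const_mul, integral_exp_neg_mul_Ioi_zero (hbpos r)]
    _ = (∑ r ∈ Finset.range (n + 1),
            (n.choose r : ℝ) * (-1) ^ r * ((r : ℝ) + (((n+2:ℕ):ℝ) + 2 * s) / (((n+2:ℕ):ℝ) + s))⁻¹) /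
        (∑ r ∈ Finset.range (n + 1), (n.choose r : ℝ) * (-1) ^ r * ((r : ℝ) + 1)⁻¹) := by
        rw [alt_sum_inv n, div_inv_eq_mul, Finset.sum_mul]
        refine Finset.sum_congr rfl fun r _ => ?_
        have hkey : (r : ℝ) + (((n+2:ℕ):ℝ) + 2 * s) / (((n+2:ℕ):ℝ) + s) = s * b r := by
          simp only [hb, hAdef]
          field_simp
          ring
        rw [hkey, mul_inv]
        simp only [hc]
        push_cast
        ring
end

section
/- For every N ≥ 2 and σ² > 0, the correct-detection probability P_c defined by P_c = [Σ_{r=0}^{N-2} C(N-2,r)(-1)^r (r + (N+2σ²)/(N+σ²))^{-1}] / [Σ_{r=0}^{N-2} C(N-2,r)(-1)^r (r+1)^{-1}] satisfies 1/N ≤ P_c ≤ 1, with P_c → 1 as σ² → 0 and P_c → 1/N as σ² → ∞. -/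
open Real Finset Filter

noncomputable def Pc (N : ℕ) (s : ℝ) : ℝ :=
  (∑ r ∈ Finset.range (N - 1),
      ((N - 2).choose r : ℝ) * (-1) ^ r * ((r : ℝ) + ((N : ℝ) + 2 * s) / ((N : ℝ) + s))⁻¹) /
  (∑ r ∈ Finset.range (N - 1), ((N - 2).choose r : ℝ) * (-1) ^ r * ((r : ℝ) + 1)⁻¹)

lemma prod_pos' (x : ℝ) (hx : 0 < x) (n : ℕ) : 0 < ∏ j ∈ Finset.range n, (x + (j:ℝ)) := by
  apply Finset.prod_pos; intro j _; positivity

lemma key (M : ℕ) : ∀ x : ℝ, 0 < x →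
    ∑ r ∈ Finset.range (M+1), ((M.choose r : ℝ)) * (-1)^r * ((r:ℝ) + x)⁻¹
      = (M.factorial : ℝ) / ∏ j ∈ Finset.range (M+1), (x + (j:ℝ)) := by
  induction M with
  | zero => intro x hx; simp
  | succ M ih =>
    intro x hx
    have hsplit : ∑ r ∈ Finset.range (M+2), (((M+1).choose r : ℝ)) * (-1)^r * ((r:ℝ) + x)⁻¹
        = (∑ r ∈ Finset.range (M+1), (((M+1).choose (r+1) : ℝ)) * (-1)^(r+1) * (((r:ℝ)+1) + x)⁻¹)
          + x⁻¹ := by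
      rw [Finset.sum_range_succ']; push_cast; ring_nf; simp
      rw [add_comm]; congr 1; congr 1; apply Finset.sum_congr rfl; intro i _; ring
    have hterm : ∀ r ∈ Finset.range (M+1),
        (((M+1).choose (r+1) : ℝ)) * (-1)^(r+1) * (((r:ℝ)+1) + x)⁻¹
        = ((M.choose r : ℝ)) * (-1)^(r+1) * (((r:ℝ)+1) + x)⁻¹
          + ((M.choose (r+1) : ℝ)) * (-1)^(r+1) * (((r:ℝ)+1) + x)⁻¹ := by
      intro r _
      rw [Nat.choose_succ_succ]; push_cast; ring
    rw [hsplit, Finset.sum_congr rfl hterm, Finset.sum_add_distrib]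
    have hA : ∑ r ∈ Finset.range (M+1), ((M.choose r : ℝ)) * (-1)^(r+1) * (((r:ℝ)+1) + x)⁻¹
        = -((M.factorial : ℝ) / ∏ j ∈ Finset.range (M+1), ((x+1) + (j:ℝ))) := by
      rw [← ih (x+1) (by linarith), ← Finset.sum_neg_distrib]
      apply Finset.sum_congr rfl
      intro r _; ring_nf
    have hB : ∑ r ∈ Finset.range (M+1), ((M.choose (r+1) : ℝ)) * (-1)^(r+1) * (((r:ℝ)+1) + x)⁻¹
        = (M.factorial : ℝ) / (∏ j ∈ Finset.range (M+1), (x + (j:ℝ))) - x⁻¹ := by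
      have h2 : ∑ r ∈ Finset.range (M+2), ((M.choose r : ℝ)) * (-1)^r * ((r:ℝ) + x)⁻¹
          = (∑ r ∈ Finset.range (M+1), ((M.choose (r+1) : ℝ)) * (-1)^(r+1) * (((r:ℝ)+1) + x)⁻¹) + x⁻¹ := by
        rw [Finset.sum_range_succ']; push_cast; ring_nf; simp
        rw [add_comm]; congr 1; congr 1; apply Finset.sum_congr rfl; intro i _; ring
      have h3 : ∑ r ∈ Finset.range (M+2), ((M.choose r : ℝ)) * (-1)^r * ((r:ℝ) + x)⁻¹
          = ∑ r ∈ Finset.range (M+1), ((M.choose r : ℝ)) * (-1)^r * ((r:ℝ) + x)⁻¹ := by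
        rw [Finset.sum_range_succ, Nat.choose_succ_self]; simp
      rw [h3, ih x hx] at h2
      linarith [h2]
    rw [hA, hB]
    have hP : 0 < ∏ j ∈ Finset.range (M+1), (x + (j:ℝ)) := prod_pos' x hx _
    have hQ : 0 < ∏ j ∈ Finset.range (M+1), ((x+1) + (j:ℝ)) := prod_pos' (x+1) (by linarith) _
    set P := ∏ j ∈ Finset.range (M+1), (x + (j:ℝ)) with hPdef
    set Q := ∏ j ∈ Finset.range (M+1), ((x+1) + (j:ℝ)) with hQdef
    have hR1 : ∏ j ∈ Finset.range (M+2), (x + (j:ℝ)) = P * (x + (M+1:ℕ)) := by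
      rw [Finset.prod_range_succ]
    have hR2 : ∏ j ∈ Finset.range (M+2), (x + (j:ℝ)) = Q * x := by
      rw [Finset.prod_range_succ']
      congr 1
      apply Finset.prod_congr rfl
      intro j _; push_cast; ring
      push_cast; ring
    rw [hR1]
    have hfact : ((M+1).factorial : ℝ) = (M+1) * M.factorial := by
      rw [Nat.factorial_succ]; push_cast; ring
    have hQx : Q * x = P * (x + (M+1:ℕ)) := by rw [← hR2, hR1]
    push_cast at hQx
    have hkey : (M.factorial:ℝ)/P - (M.factorial:ℝ)/Q
        = ((M+1).factorial : ℝ)/(P * (x + ((M:ℝ)+1))) := by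
      rw [div_sub_div _ _ hP.ne' hQ.ne', hfact, div_eq_div_iff (by positivity) (by positivity)]
      linear_combination ((M.factorial:ℝ)*P) * hQx
    push_cast
    linarith [hkey]

lemma prod_one_fact (n : ℕ) : ∏ j ∈ Finset.range n, ((1:ℝ) + (j:ℝ)) = (n.factorial : ℝ) := by
  induction n with
  | zero => simp
  | succ n ih => rw [Finset.prod_range_succ, ih, Nat.factorial_succ]; push_cast; ring

lemma prod_two_fact (n : ℕ) : ∏ j ∈ Finset.range n, ((2:ℝ) + (j:ℝ)) = ((n+1).factorial : ℝ) := by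
  have h := prod_one_fact (n+1)
  rw [Finset.prod_range_succ'] at h
  simp only [Nat.cast_zero, add_zero] at h
  rw [← h]
  rw [mul_one]
  apply Finset.prod_congr rfl
  intro j _; push_cast; ring

lemma PcF (M : ℕ) (x : ℝ) (hx : 0 < x) :
    (∑ r ∈ Finset.range (M+1), ((M.choose r : ℝ)) * (-1)^r * ((r:ℝ) + x)⁻¹) /
    (∑ r ∈ Finset.range (M+1), ((M.choose r : ℝ)) * (-1)^r * ((r:ℝ) + 1)⁻¹)
    = ((M+1).factorial : ℝ) / ∏ j ∈ Finset.range (M+1), (x + (j:ℝ)) := by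
  rw [key M x hx, key M 1 one_pos, prod_one_fact]
  have hP : 0 < ∏ j ∈ Finset.range (M+1), (x + (j:ℝ)) := prod_pos' x hx _
  have h1 : (0:ℝ) < M.factorial := by positivity
  have h2 : (0:ℝ) < (M+1).factorial := by positivity
  field_simp

theorem Pc_bounds_and_limits (N : ℕ) (hN : 2 ≤ N) :
    (∀ s : ℝ, 0 < s → 1 / (N : ℝ) ≤ Pc N s ∧ Pc N s ≤ 1) ∧
    Tendsto (Pc N) (nhdsWithin 0 (Set.Ioi 0)) (nhds 1) ∧
    Tendsto (Pc N) atTop (nhds (1 / (N : ℝ))) := by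
  obtain ⟨M, rfl⟩ : ∃ M, N = M + 2 := ⟨N - 2, by omega⟩
  have hNR : (0:ℝ) < ((M+2:ℕ):ℝ) := by positivity
  set xf : ℝ → ℝ := fun s => (((M+2:ℕ):ℝ) + 2 * s) / (((M+2:ℕ):ℝ) + s) with hxf
  have hPc : ∀ s : ℝ, 0 < xf s →
      Pc (M+2) s = (((M+1)).factorial : ℝ) / ∏ j ∈ Finset.range (M+1), (xf s + (j:ℝ)) := by
    intro s hs
    have h1 : M + 2 - 1 = M + 1 := by omega
    have h2 : M + 2 - 2 = M := by omega
    rw [Pc, h1, h2]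
    exact PcF M (xf s) hs
  have hxpos : ∀ s : ℝ, 0 < s → 0 < xf s := by
    intro s hs; apply div_pos <;> [linarith; linarith]
  have hx1 : ∀ s : ℝ, 0 < s → 1 ≤ xf s := by
    intro s hs
    rw [hxf]; rw [le_div_iff₀ (by linarith)]; linarith
  have hx2 : ∀ s : ℝ, 0 < s → xf s ≤ 2 := by
    intro s hs
    rw [hxf]; rw [div_le_iff₀ (by linarith)]; linarith
  -- continuity of the target function
  have hFcont : ∀ (a : ℝ) (l : Filter ℝ) (g : ℝ → ℝ), Tendsto g l (nhds a) → 0 < a →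
      Tendsto (fun s => (((M+1)).factorial : ℝ) / ∏ j ∈ Finset.range (M+1), (g s + (j:ℝ))) l
        (nhds ((((M+1)).factorial : ℝ) / ∏ j ∈ Finset.range (M+1), (a + (j:ℝ)))) := by
    intro a l g hg ha
    apply Tendsto.div tendsto_const_nhds
    · apply tendsto_finset_prod
      intro j _
      exact hg.add tendsto_const_nhds
    · exact (prod_pos' a ha _).ne'
  refine ⟨?_, ?_, ?_⟩
  · -- bounds
    intro s hs
    rw [hPc s (hxpos s hs)]
    have hP : 0 < ∏ j ∈ Finset.range (M+1), (xf s + (j:ℝ)) := prod_pos' _ (hxpos s hs) _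
    have hlow : (((M+1)).factorial : ℝ) ≤ ∏ j ∈ Finset.range (M+1), (xf s + (j:ℝ)) := by
      rw [← prod_one_fact (M+1)]
      apply Finset.prod_le_prod
      · intro j _; positivity
      · intro j _; have := hx1 s hs; linarith
    have hhigh : ∏ j ∈ Finset.range (M+1), (xf s + (j:ℝ)) ≤ (((M+2)).factorial : ℝ) := by
      rw [← prod_two_fact (M+1)]
      apply Finset.prod_le_prod
      · intro j _; have h0 := hxpos s hs; positivity
      · intro j _; have := hx2 s hs; linarith
    constructor
    · rw [div_le_div_iff₀ hNR hP]
      have hfs : ((M+2).factorial : ℝ) = ((M+1).factorial : ℝ) * ((M+2:ℕ):ℝ) := by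
        rw [Nat.factorial_succ]; push_cast; ring
      calc 1 * ∏ j ∈ Finset.range (M+1), (xf s + (j:ℝ))
          ≤ ((M+2).factorial : ℝ) := by rw [one_mul]; exact hhigh
        _ = ((M+1).factorial : ℝ) * ((M+2:ℕ):ℝ) := hfs
    · rw [div_le_one hP]; exact hlow
  · -- limit as s → 0+
    have hx0 : Tendsto xf (nhdsWithin 0 (Set.Ioi 0)) (nhds 1) := by
      have : Tendsto xf (nhds 0) (nhds 1) := by
        have h1 : Tendsto (fun s : ℝ => ((M+2:ℕ):ℝ) + 2 * s) (nhds 0) (nhds ((M+2:ℕ):ℝ)) := by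
          have hc : Continuous (fun s : ℝ => ((M+2:ℕ):ℝ) + 2 * s) := by continuity
          simpa using hc.tendsto 0
        have h2 : Tendsto (fun s : ℝ => ((M+2:ℕ):ℝ) + s) (nhds 0) (nhds ((M+2:ℕ):ℝ)) := by
          have hc : Continuous (fun s : ℝ => ((M+2:ℕ):ℝ) + s) := by continuity
          simpa using hc.tendsto 0
        have := h1.div h2 hNR.ne'
        rwa [div_self hNR.ne'] at this
      exact this.mono_left nhdsWithin_le_nhds
    have hF := hFcont 1 (nhdsWithin 0 (Set.Ioi 0)) xf hx0 one_pos
    rw [prod_one_fact (M+1), div_self (by positivity : (((M+1)).factorial : ℝ) ≠ 0)] at hF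
    apply hF.congr'
    filter_upwards [self_mem_nhdsWithin] with s hs
    exact (hPc s (hxpos s hs)).symm
  · -- limit as s → ∞
    have hx0 : Tendsto xf atTop (nhds 2) := by
      have h2 : Tendsto (fun s : ℝ => ((M+2:ℕ):ℝ) + s) atTop atTop :=
        tendsto_atTop_add_const_left _ _ tendsto_id
      have hinv : Tendsto (fun s : ℝ => (((M+2:ℕ):ℝ) + s)⁻¹) atTop (nhds 0) :=
        h2.inv_tendsto_atTop
      have h3 : Tendsto (fun s : ℝ => 2 - ((M+2:ℕ):ℝ) * (((M+2:ℕ):ℝ) + s)⁻¹) atTop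
          (nhds (2 - ((M+2:ℕ):ℝ) * 0)) :=
        tendsto_const_nhds.sub (tendsto_const_nhds.mul hinv)
      rw [mul_zero, sub_zero] at h3
      apply h3.congr'
      filter_upwards [eventually_gt_atTop (0:ℝ)] with s hs
      have hne : ((M+2:ℕ):ℝ) + s ≠ 0 := by linarith
      rw [hxf]
      field_simp
      ring
    have hF := hFcont 2 atTop xf hx0 two_pos
    rw [prod_two_fact (M+1)] at hF
    have heq : (((M+1)).factorial : ℝ) / (((M+1+1)).factorial : ℝ) = 1 / ((M+2:ℕ):ℝ) := by
      have hf2 : ((M+1+1).factorial : ℝ) = ((M+2:ℕ):ℝ) * ((M+1).factorial : ℝ) := by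
        rw [Nat.factorial_succ]; push_cast; ring
      rw [hf2, div_eq_div_iff (by positivity) (by positivity)]
      ring
    rw [heq] at hF
    apply hF.congr'
    filter_upwards [eventually_gt_atTop (0:ℝ)] with s hs
    exact (hPc s (hxpos s hs)).symm
end
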